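/- In a quantum torus, the first mutated cluster variable q-commutes correctly with the unmutated variables: with x_k' := x^{a'} + x^{a''} (where a', a'' ∈ Z^K are given by a'_k = a''_k = −1, a'_i = max(0, b_{ik}) and a''_i = max(0, −b_{ik}) for i ≠ k), for every j ∈ K with j ≠ k one has x_j · x_k' = q^{μ_k(L)_{jk}} x_k' · x_j in the skew field of fractions, where μ_k(L)_{jk} = −λ_{jk} + Σ_{t∈K} max(0, −b_{tk}) λ_{jt}. -/
import Mathlib


/-- The exponent `∑_{i > j in the order given by the list} a i * a j * λ i j`
of the `q^{1/2}`-prefactor, computed along a list enumerating the index set. -/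
def monoExp {K : Type*} (lam : K → K → ℤ) (a : K → ℤ) : List K → ℤ
  | [] => 0
  | i :: t => (t.map fun j => a j * a i * lam j i).sum + monoExp lam a t

/-- The renormalized Laurent monomial `x^a` (for `a : K → ℤ`) with respect to the
total order given by the list `l`, where the unit `v` plays the role of `q^{1/2}`. -/
noncomputable def zmono {K A : Type*} [Ring A] (v : Aˣ) (lam : K → K → ℤ)
    (x : K → Aˣ) (a : K → ℤ) (l : List K) : A :=
  ((v ^ monoExp lam a l : Aˣ) : A) * (((l.map fun i => x i ^ a i).prod : Aˣ) : A)

private lemma qcomm_zpow {A : Type*} [Ring A] (v u w : Aˣ)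
    (hc : ∀ z : Aˣ, v * z = z * v)
    (c : ℤ) (h : w * u = v ^ c * (u * w)) (n : ℤ) :
    w * u ^ n = v ^ (c * n) * (u ^ n * w) := by
  have hsemi : SemiconjBy w u (v ^ c * u) := by
    simpa [SemiconjBy, mul_assoc] using h
  have h0 : Commute v u := hc u
  have hcv : Commute (v ^ c) u := h0.zpow_left c
  calc w * u ^ n = (v ^ c * u) ^ n * w := hsemi.zpow_right n
    _ = (v ^ c) ^ n * u ^ n * w := by rw [hcv.mul_zpow]
    _ = v ^ (c * n) * (u ^ n * w) := by rw [← zpow_mul, mul_assoc]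

private lemma qcomm_list {K A : Type*} [Ring A] (v : Aˣ)
    (hc : ∀ z : Aˣ, v * z = z * v) (lam : K → K → ℤ) (x : K → Aˣ)
    (hrelU : ∀ i i', x i * x i' = v ^ (2 * lam i i') * (x i' * x i))
    (a : K → ℤ) (j : K) : ∀ l : List K,
    x j * (l.map fun i => x i ^ a i).prod
      = v ^ (2 * (l.map fun i => a i * lam j i).sum)
          * ((l.map fun i => x i ^ a i).prod * x j) := by
  have hswap : ∀ (m : ℤ) (z y : Aˣ), z * (v ^ m * y) = v ^ m * (z * y) := by
    intro m z y
    have h0 : Commute v z := hc z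
    have h : v ^ m * z = z * v ^ m := h0.zpow_left m
    rw [← mul_assoc, ← h, mul_assoc]
  intro l
  induction l with
  | nil => simp
  | cons i t ih =>
    simp only [List.map_cons, List.prod_cons, List.sum_cons]
    set P : Aˣ := (t.map fun i => x i ^ a i).prod with hP
    set S : ℤ := (t.map fun i => a i * lam j i).sum with hS
    have h1 : x j * x i ^ a i = v ^ (2 * lam j i * a i) * (x i ^ a i * x j) :=
      qcomm_zpow v (x i) (x j) hc (2 * lam j i) (hrelU j i) (a i)
    have main : x j * (x i ^ a i * P)
        = v ^ (2 * lam j i * a i + 2 * S) * (x i ^ a i * (P * x j)) := by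
      calc x j * (x i ^ a i * P) = (x j * x i ^ a i) * P := (mul_assoc _ _ _).symm
        _ = (v ^ (2 * lam j i * a i) * (x i ^ a i * x j)) * P := by rw [h1]
        _ = v ^ (2 * lam j i * a i) * (x i ^ a i * (x j * P)) := by
            simp only [mul_assoc]
        _ = v ^ (2 * lam j i * a i) * (x i ^ a i * (v ^ (2 * S) * (P * x j))) := by
            rw [ih]
        _ = v ^ (2 * lam j i * a i) * (v ^ (2 * S) * (x i ^ a i * (P * x j))) := by
            rw [hswap]
        _ = v ^ (2 * lam j i * a i + 2 * S) * (x i ^ a i * (P * x j)) := by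
            rw [← mul_assoc, ← zpow_add]
    have he : 2 * lam j i * a i + 2 * S = 2 * (a i * lam j i + S) := by ring
    rw [main, he, mul_assoc]

theorem mutated_variable_qcommutes {K A : Type*} [Fintype K] [DecidableEq K] [Ring A]
    (ex : Finset K) (v : Aˣ) (lam B : K → K → ℤ) (d : ℤ) (hd : 0 < d)
    (x : K → Aˣ)
    (hskew : ∀ i j, lam i j = - lam j i)
    (hBskew : ∀ i ∈ ex, ∀ j ∈ ex, B i j = - B j i)
    (hcentral : ∀ y : A, (v : A) * y = y * (v : A))
    (hrel : ∀ i j, (x i : A) * (x j : A)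
        = ((v ^ (2 * lam i j) : Aˣ) : A) * ((x j : A) * (x i : A)))
    (hcompat : ∀ i : K, ∀ j ∈ ex, (∑ u : K, lam i u * B u j) = if i = j then d else 0)
    (l : List K) (hl : l.Nodup) (hcov : ∀ i : K, i ∈ l)
    (k : K) (hk : k ∈ ex)
    (a' a'' : K → ℤ)
    (ha' : ∀ i, a' i = if i = k then -1 else max 0 (B i k))
    (ha'' : ∀ i, a'' i = if i = k then -1 else max 0 (- B i k))
    (xk' : A) (hxk' : xk' = zmono v lam x a' l + zmono v lam x a'' l)
    (j : K) (hj : j ≠ k) :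
    (x j : A) * xk'
      = ((v ^ (2 * (- lam j k + ∑ u : K, max 0 (- B u k) * lam j u)) : Aˣ) : A)
          * (xk' * (x j : A)) := by
  have hcU : ∀ z : Aˣ, v * z = z * v := fun z =>
    Units.ext (by simp only [Units.val_mul]; exact hcentral z)
  have hrelU : ∀ i i', x i * x i' = v ^ (2 * lam i i') * (x i' * x i) := fun i i' =>
    Units.ext (by simp only [Units.val_mul]; exact hrel i i')
  have hswap : ∀ (m : ℤ) (z y : Aˣ), z * (v ^ m * y) = v ^ m * (z * y) := by
    intro m z y
    have h0 : Commute v z := hcU z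
    have h : v ^ m * z = z * v ^ m := h0.zpow_left m
    rw [← mul_assoc, ← h, mul_assoc]
  have huniv : l.toFinset = Finset.univ :=
    Finset.eq_univ_iff_forall.mpr fun i => List.mem_toFinset.mpr (hcov i)
  -- the key q-commutation for a single renormalized monomial
  have key : ∀ a : K → ℤ,
      (x j : A) * zmono v lam x a l
        = ((v ^ (2 * ∑ u : K, a u * lam j u) : Aˣ) : A)
            * (zmono v lam x a l * (x j : A)) := by
    intro a
    have hsum : (l.map fun i => a i * lam j i).sum = ∑ u : K, a u * lam j u := by
      rw [← List.sum_toFinset _ hl, huniv]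
    have hq := qcomm_list v hcU lam x hrelU a j l
    rw [hsum] at hq
    set E : ℤ := monoExp lam a l with hE
    set P : Aˣ := (l.map fun i => x i ^ a i).prod with hP
    have hU : x j * (v ^ E * P)
        = v ^ (2 * ∑ u : K, a u * lam j u) * ((v ^ E * P) * x j) := by
      calc x j * (v ^ E * P) = v ^ E * (x j * P) := hswap E (x j) P
        _ = v ^ E * (v ^ (2 * ∑ u : K, a u * lam j u) * (P * x j)) := by rw [hq]
        _ = v ^ (2 * ∑ u : K, a u * lam j u) * (v ^ E * (P * x j)) :=
            hswap _ (v ^ E) (P * x j)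
        _ = v ^ (2 * ∑ u : K, a u * lam j u) * ((v ^ E * P) * x j) := by
            rw [mul_assoc]
    simp only [zmono, ← hE, ← hP]
    exact_mod_cast hU
  -- the exponent computations
  have hBkk : B k k = 0 := by have := hBskew k hk k hk; omega
  have h0 : (∑ u : K, lam j u * B u k) = 0 := by
    have := hcompat j k hk
    simpa [hj] using this
  have hS2 : (∑ u : K, a'' u * lam j u)
      = - lam j k + ∑ u : K, max 0 (- B u k) * lam j u := by
    have hterm : ∀ u : K,
        a'' u * lam j u = max 0 (- B u k) * lam j u + (if u = k then - lam j k else 0) := by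
      intro u
      rcases eq_or_ne u k with rfl | h
      · simp [ha'' u, hBkk]
      · simp [ha'' u, h]
    rw [Finset.sum_congr rfl fun u _ => hterm u, Finset.sum_add_distrib,
      Finset.sum_ite_eq' Finset.univ k fun _ => - lam j k, if_pos (Finset.mem_univ k)]
    ring
  have hS1 : (∑ u : K, a' u * lam j u)
      = - lam j k + ∑ u : K, max 0 (- B u k) * lam j u := by
    have h3 : (∑ u : K, (a' u * lam j u - a'' u * lam j u)) = ∑ u : K, B u k * lam j u := by
      apply Finset.sum_congr rfl
      intro u _
      rcases eq_or_ne u k with rfl | h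
      · simp [ha' u, ha'' u, hBkk]
      · have h1 : a' u = max 0 (B u k) := by rw [ha' u, if_neg h]
        have h2 : a'' u = max 0 (- B u k) := by rw [ha'' u, if_neg h]
        rw [h1, h2, ← sub_mul]
        congr 1
        omega
    have h4 : (∑ u : K, B u k * lam j u) = 0 := by
      calc (∑ u : K, B u k * lam j u) = ∑ u : K, lam j u * B u k := by
            simp [mul_comm]
        _ = 0 := h0
    have h5 : (∑ u : K, a' u * lam j u) - (∑ u : K, a'' u * lam j u) = 0 := by
      rw [← Finset.sum_sub_distrib, h3, h4]
    omega
  subst hxk'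
  rw [mul_add, key a', key a'', hS1, hS2, add_mul]
  exact (mul_add _ _ _).symm
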